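/- Let K ≥ 2 and L ≥ 1 be integers. Let r_2, …, r_K be reals with 1/2 > r_2 ≥ r_3 ≥ … ≥ r_K > 0. For each ℓ ∈ {1,…,L} let C_ℓ > 0 and let d_{ℓ,1} ≥ d_{ℓ,2} ≥ … ≥ d_{ℓ,K} > 0 be reals, and define H_ℓ = (d_{ℓ,1} + d_{ℓ,2})/(1/2 − r_2)² + Σ_{k=3}^K d_{ℓ,k}/(1/2 − r_k)². Let t_1, …, t_K ≥ 0 be reals such that for every ℓ ∈ {1,…,L}: t_1·d_{ℓ,2} + t_2·d_{ℓ,1} + Σ_{k=3}^K t_k·d_{ℓ,k} ≤ C_ℓ. Then there exists i ∈ {2,…,K} such that t_i·(1/2 − r_i)² ≤ min_{ℓ ∈ {1,…,L}} ( 2·C_ℓ / H_ℓ ). -/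

import Mathlib

lemma anti_chain {f : ℕ → ℝ} {a K : ℕ} (h : ∀ k, a ≤ k → k < K → f (k + 1) ≤ f k) :
    ∀ j k, a ≤ j → j ≤ k → k ≤ K → f k ≤ f j := by
  intro j k hj hjk hk
  induction k, hjk using Nat.le_induction with
  | base => exact le_rfl
  | succ k hjk ih =>
    exact le_trans (h k (le_trans hj hjk) (by omega)) (ih (by omega))

theorem exists_underexplored_arm (K L : ℕ) (hK : 2 ≤ K) (hL : 1 ≤ L)
    (r : ℕ → ℝ) (hr2 : r 2 < 1 / 2)
    (hrmono : ∀ k, 2 ≤ k → k < K → r (k + 1) ≤ r k) (hrK : 0 < r K)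
    (C : ℕ → ℝ) (hC : ∀ ℓ, 1 ≤ ℓ → ℓ ≤ L → 0 < C ℓ)
    (d : ℕ → ℕ → ℝ)
    (hdmono : ∀ ℓ, 1 ≤ ℓ → ℓ ≤ L → ∀ k, 1 ≤ k → k < K → d ℓ (k + 1) ≤ d ℓ k)
    (hdK : ∀ ℓ, 1 ≤ ℓ → ℓ ≤ L → 0 < d ℓ K)
    (H : ℕ → ℝ)
    (hH : ∀ ℓ, H ℓ = (d ℓ 1 + d ℓ 2) / (1 / 2 - r 2) ^ 2
      + ∑ k ∈ Finset.Icc 3 K, d ℓ k / (1 / 2 - r k) ^ 2)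
    (t : ℕ → ℝ) (ht : ∀ k, 1 ≤ k → k ≤ K → 0 ≤ t k)
    (hcons : ∀ ℓ, 1 ≤ ℓ → ℓ ≤ L →
      t 1 * d ℓ 2 + t 2 * d ℓ 1 + ∑ k ∈ Finset.Icc 3 K, t k * d ℓ k ≤ C ℓ) :
    ∃ i, 2 ≤ i ∧ i ≤ K ∧
      t i * (1 / 2 - r i) ^ 2 ≤
        (Finset.Icc 1 L).inf' (Finset.nonempty_Icc.mpr hL) (fun ℓ => 2 * C ℓ / H ℓ) := by
  by_contra hcon
  push_neg at hcon
  set m := (Finset.Icc 1 L).inf' (Finset.nonempty_Icc.mpr hL) (fun ℓ => 2 * C ℓ / H ℓ) with hmdef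
  obtain ⟨ℓ, hℓmem, hℓeq⟩ := Finset.exists_mem_eq_inf' (Finset.nonempty_Icc.mpr hL)
    (fun ℓ => 2 * C ℓ / H ℓ)
  rw [Finset.mem_Icc] at hℓmem
  obtain ⟨hℓ1, hℓL⟩ := hℓmem
  -- basic positivity facts
  have hrle : ∀ k, 2 ≤ k → k ≤ K → r k ≤ r 2 := fun k h2 hk =>
    anti_chain hrmono 2 k le_rfl h2 hk
  have hsq : ∀ k, 2 ≤ k → k ≤ K → 0 < (1 / 2 - r k) ^ 2 := by
    intro k h2 hk
    have := hrle k h2 hk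
    nlinarith
  have hdpos : ∀ k, 1 ≤ k → k ≤ K → 0 < d ℓ k := by
    intro k h1 hk
    have := anti_chain (hdmono ℓ hℓ1 hℓL) k K h1 hk le_rfl
    linarith [hdK ℓ hℓ1 hℓL]
  have hsq2 : 0 < (1 / 2 - r 2) ^ 2 := hsq 2 le_rfl hK
  have hHpos : 0 < H ℓ := by
    rw [hH]
    have h1 : 0 < (d ℓ 1 + d ℓ 2) / (1 / 2 - r 2) ^ 2 := by
      have := hdpos 1 le_rfl (by omega)
      have := hdpos 2 one_le_two hK
      positivity
    have h2 : 0 ≤ ∑ k ∈ Finset.Icc 3 K, d ℓ k / (1 / 2 - r k) ^ 2 := by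
      apply Finset.sum_nonneg
      intro k hk
      rw [Finset.mem_Icc] at hk
      exact le_of_lt (div_pos (hdpos k (by omega) hk.2) (hsq k (by omega) hk.2))
    linarith
  have hmeq : m = 2 * C ℓ / H ℓ := hℓeq
  have hmpos : 0 < m := by
    rw [hmeq]
    exact div_pos (by linarith [hC ℓ hℓ1 hℓL]) hHpos
  have hCeq : C ℓ = m * H ℓ / 2 := by
    rw [hmeq]
    field_simp
  -- strict lower bound on the constraint LHS
  have hd21 : d ℓ 2 ≤ d ℓ 1 := hdmono ℓ hℓ1 hℓL 1 le_rfl (by omega)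
  have h2con : m < t 2 * (1 / 2 - r 2) ^ 2 := hcon 2 le_rfl hK
  have h1t : 0 ≤ t 1 * d ℓ 2 :=
    mul_nonneg (ht 1 le_rfl (by omega)) (le_of_lt (hdpos 2 one_le_two hK))
  have key1 : m * ((d ℓ 1 + d ℓ 2) / (1 / 2 - r 2) ^ 2) / 2 < t 2 * d ℓ 1 := by
    rw [show m * ((d ℓ 1 + d ℓ 2) / (1 / 2 - r 2) ^ 2) / 2
        = m * (d ℓ 1 + d ℓ 2) / (2 * (1 / 2 - r 2) ^ 2) by field_simp [hsq2.ne']]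
    rw [div_lt_iff₀ (by positivity)]
    have hd1 : 0 < d ℓ 1 := hdpos 1 le_rfl (by omega)
    nlinarith
  have key2 : m * (∑ k ∈ Finset.Icc 3 K, d ℓ k / (1 / 2 - r k) ^ 2) / 2
      ≤ ∑ k ∈ Finset.Icc 3 K, t k * d ℓ k := by
    rw [Finset.mul_sum, Finset.sum_div]
    apply Finset.sum_le_sum
    intro k hk
    rw [Finset.mem_Icc] at hk
    have hsk := hsq k (by omega) hk.2
    have hdk := hdpos k (by omega) hk.2
    have htk := hcon k (by omega) hk.2
    rw [show m * (d ℓ k / (1 / 2 - r k) ^ 2) / 2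
        = m * d ℓ k / (2 * (1 / 2 - r k) ^ 2) by field_simp [hsk.ne']]
    rw [div_le_iff₀ (by positivity)]
    nlinarith
  have hHle := hcons ℓ hℓ1 hℓL
  rw [hCeq, hH] at hHle
  have : m * ((d ℓ 1 + d ℓ 2) / (1 / 2 - r 2) ^ 2
        + ∑ k ∈ Finset.Icc 3 K, d ℓ k / (1 / 2 - r k) ^ 2) / 2
      = m * ((d ℓ 1 + d ℓ 2) / (1 / 2 - r 2) ^ 2) / 2
        + m * (∑ k ∈ Finset.Icc 3 K, d ℓ k / (1 / 2 - r k) ^ 2) / 2 := by ring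
  linarith
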